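/- Define f(g,k) = ∑_{i=0}^{g} (-1)^i * C(g,i) * (g+1-i)^k. Then for all g, k ≥ 0 the recursion f(g+1, k+1) = (g+1) * ∑_{j=0}^{k} C(k+1, j) * f(g, k-j) holds. -/

import Mathlib

open Finset

/-- `f(g,k) = ∑_{i=0}^{g} (-1)^i * C(g,i) * (g+1-i)^k`. -/
def altSum (g k : ℕ) : ℤ :=
  ∑ i ∈ Finset.range (g + 1), (-1 : ℤ) ^ i * (g.choose i) * ((g : ℤ) + 1 - i) ^ k

lemma altSum_lemA (x : ℤ) (k : ℕ) :
    x * ∑ j ∈ range (k + 1), ((k + 1).choose j : ℤ) * x ^ (k - j)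
      = (x + 1) ^ (k + 1) - 1 := by
  have h1 : x * ∑ j ∈ range (k + 1), ((k + 1).choose j : ℤ) * x ^ (k - j)
      = ∑ j ∈ range (k + 1), ((k + 1).choose (j + 1) : ℤ) * x ^ (j + 1) := by
    rw [Finset.mul_sum, ← Finset.sum_range_reflect]
    apply Finset.sum_congr rfl
    intro j hj
    simp only [Finset.mem_range] at hj
    have h2 : k + 1 - 1 - j = k - j := by omega
    have h3 : (k + 1).choose (k - j) = (k + 1).choose (j + 1) := by
      rw [← Nat.choose_symm (by omega : k - j ≤ k + 1)]
      congr 1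
      omega
    have h4 : k - (k - j) = j := by omega
    rw [h2, h3, h4]
    ring
  have h5 : (x + 1) ^ (k + 1)
      = (∑ j ∈ range (k + 1), ((k + 1).choose (j + 1) : ℤ) * x ^ (j + 1)) + 1 := by
    rw [add_pow, Finset.sum_range_succ']
    simp only [one_pow, pow_zero, Nat.choose_zero_right, Nat.cast_one, mul_one, one_mul]
    congr 1
    apply Finset.sum_congr rfl
    intro j hj
    ring
  rw [h1, h5]
  ring

/-- The recursion `f(g+1, k+1) = (g+1) * ∑_{j=0}^{k} C(k+1, j) * f(g, k-j)`. -/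
theorem altSum_recursion (g k : ℕ) :
    altSum (g + 1) (k + 1) =
      ((g : ℤ) + 1) * ∑ j ∈ Finset.range (k + 1), ((k + 1).choose j) * altSum g (k - j) := by
  have key : ∀ i ∈ range (g + 1),
      ((g : ℤ) + 1) * (g.choose i : ℤ) = ((g + 1).choose i : ℤ) * ((g : ℤ) + 1 - i) := by
    intro i hi
    simp only [mem_range] at hi
    have h := Nat.choose_mul_succ_eq g i
    have hc : ((g + 1 - i : ℕ) : ℤ) = (g : ℤ) + 1 - i := by
      push_cast [Nat.cast_sub (by omega : i ≤ g + 1)]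
      ring
    have h' : ((g.choose i * (g + 1) : ℕ) : ℤ) = (((g + 1).choose i * (g + 1 - i) : ℕ) : ℤ) := by
      exact_mod_cast congrArg Nat.cast h
    push_cast [hc] at h'
    linarith
  have hRHS : ((g : ℤ) + 1) * ∑ j ∈ range (k + 1), ((k + 1).choose j : ℤ) * altSum g (k - j)
      = ∑ i ∈ range (g + 1),
          (-1 : ℤ) ^ i * ((g + 1).choose i : ℤ) * (((g : ℤ) + 2 - i) ^ (k + 1) - 1) := by
    simp only [altSum, Finset.mul_sum]
    rw [Finset.sum_comm]
    apply Finset.sum_congr rfl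
    intro i hi
    have hkey := key i hi
    have hA := altSum_lemA ((g : ℤ) + 1 - i) k
    calc ∑ j ∈ range (k + 1),
          ((g : ℤ) + 1) * (((k + 1).choose j : ℤ) * ((-1 : ℤ) ^ i * (g.choose i) * ((g : ℤ) + 1 - i) ^ (k - j)))
        = (-1 : ℤ) ^ i * (((g : ℤ) + 1) * (g.choose i : ℤ)) *
            ∑ j ∈ range (k + 1), ((k + 1).choose j : ℤ) * ((g : ℤ) + 1 - i) ^ (k - j) := by
          rw [Finset.mul_sum]
          apply Finset.sum_congr rfl
          intros
          ring
      _ = (-1 : ℤ) ^ i * ((g + 1).choose i : ℤ) *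
            (((g : ℤ) + 1 - i) * ∑ j ∈ range (k + 1), ((k + 1).choose j : ℤ) * ((g : ℤ) + 1 - i) ^ (k - j)) := by
          rw [hkey]; ring
      _ = (-1 : ℤ) ^ i * ((g + 1).choose i : ℤ) * (((g : ℤ) + 2 - i) ^ (k + 1) - 1) := by
          rw [hA]
          ring_nf
  have hLHS : altSum (g + 1) (k + 1)
      = ∑ i ∈ range (g + 2), (-1 : ℤ) ^ i * ((g + 1).choose i : ℤ) * ((g : ℤ) + 2 - i) ^ (k + 1) := by
    simp only [altSum]
    apply Finset.sum_congr rfl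
    intro i hi
    push_cast
    ring
  have halt : ∑ i ∈ range (g + 2), (-1 : ℤ) ^ i * ((g + 1).choose i : ℤ) = 0 :=
    Int.alternating_sum_range_choose_of_ne (by omega)
  have h2 : ∑ i ∈ range (g + 1), (-1 : ℤ) ^ i * ((g + 1).choose i : ℤ) = -(-1 : ℤ) ^ (g + 1) := by
    rw [Finset.sum_range_succ, Nat.choose_self] at halt
    simp at halt
    linarith
  rw [hLHS, hRHS, Finset.sum_range_succ]
  simp only [mul_sub, Finset.sum_sub_distrib, mul_one]
  rw [h2]
  have hx : ((g : ℤ) + 2 - ((g + 1 : ℕ) : ℤ)) = 1 := by push_cast; ring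
  rw [hx, Nat.choose_self]
  simp
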